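/- arXiv:2004.08275 — 3 statements merged into one kernel-verified Lean document; each statement's English description precedes it below -/
import Mathlib

section
/- Let f : ℝ → ℝ be differentiable with f(0) = 0, and suppose there exist constants 0 < Λ₁ ≤ Λ₂ such that Λ₁ ≤ −f'(x) ≤ Λ₂ for all x ∈ ℝ. Then there exists a constant γ ≤ −1 such that for all x ∈ ℝ one has x² + f(x)² ≤ 2γ·x·f(x). -/
theorem stmt_5 (f : ℝ → ℝ) (hf : Differentiable ℝ f) (h0 : f 0 = 0)
    (Λ₁ Λ₂ : ℝ) (hΛ₁ : 0 < Λ₁) (hΛ₁₂ : Λ₁ ≤ Λ₂)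
    (hd : ∀ x : ℝ, Λ₁ ≤ -deriv f x ∧ -deriv f x ≤ Λ₂) :
    ∃ γ : ℝ, γ ≤ -1 ∧ ∀ x : ℝ, x ^ 2 + f x ^ 2 ≤ 2 * γ * x * f x := by
  have hΛ₂ : 0 < Λ₂ := lt_of_lt_of_le hΛ₁ hΛ₁₂
  refine ⟨-((1 + Λ₂ ^ 2) / (2 * Λ₁)), ?_, ?_⟩
  · rw [neg_le, neg_neg, le_div_iff₀ (by positivity : (0:ℝ) < 2 * Λ₁)]
    nlinarith [sq_nonneg (Λ₂ - 1)]
  · have hA : Antitone (fun y => f y + Λ₁ * y) := by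
      apply antitone_of_deriv_nonpos
      · exact hf.add (differentiable_const _ |>.mul differentiable_id)
      · intro x
        have := (hd x).1
        have hdv : deriv (fun y => f y + Λ₁ * y) x = deriv f x + Λ₁ := by
          have := ((hf x).hasDerivAt.add ((hasDerivAt_id x).const_mul Λ₁)).deriv
          exact this.trans (by simp)
        rw [hdv]; linarith
    have hM : Monotone (fun y => f y + Λ₂ * y) := by
      apply monotone_of_deriv_nonneg
      · exact hf.add (differentiable_const _ |>.mul differentiable_id)
      · intro x
        have := (hd x).2
        have hdv : deriv (fun y => f y + Λ₂ * y) x = deriv f x + Λ₂ := by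
          have := ((hf x).hasDerivAt.add ((hasDerivAt_id x).const_mul Λ₂)).deriv
          exact this.trans (by simp)
        rw [hdv]; linarith
    intro x
    have h1 : x * f x ≤ -Λ₁ * x ^ 2 := by
      rcases le_or_gt 0 x with hx | hx
      · have := hA hx
        simp only [h0, zero_add, mul_zero] at this
        nlinarith
      · have := hA hx.le
        simp only [h0, zero_add, mul_zero] at this
        nlinarith
    have h2 : f x ^ 2 ≤ Λ₂ ^ 2 * x ^ 2 := by
      rcases le_or_gt 0 x with hx | hx
      · have ha := hA hx
        have hm := hM hx
        simp only [h0, zero_add, mul_zero] at ha hm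
        nlinarith [mul_nonneg hm (show (0:ℝ) ≤ Λ₂ * x - f x by nlinarith)]
      · have ha := hA hx.le
        have hm := hM hx.le
        simp only [h0, zero_add, mul_zero] at ha hm
        nlinarith [mul_nonneg (show (0:ℝ) ≤ -(f x + Λ₂ * x) by linarith)
          (show (0:ℝ) ≤ f x - Λ₂ * x by nlinarith)]
    set c : ℝ := (1 + Λ₂ ^ 2) / (2 * Λ₁) with hc
    have hcpos : 0 < c := by positivity
    have h3 : 2 * c * Λ₁ = 1 + Λ₂ ^ 2 := by
      rw [hc]; field_simp
    have key : 2 * c * (x * f x) ≤ 2 * c * (-Λ₁ * x ^ 2) :=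
      mul_le_mul_of_nonneg_left h1 (by positivity)
    have e : 2 * c * (-Λ₁ * x ^ 2) = -(1 + Λ₂ ^ 2) * x ^ 2 := by
      linear_combination (-x ^ 2) * h3
    have : 2 * (-c) * x * f x = -(2 * c * (x * f x)) := by ring
    rw [this]
    nlinarith [key, e, h2, sq_nonneg x]
end

section
/- Let f : ℝ → ℝ be continuously differentiable with f'(x) < 0 for all x ∈ ℝ and f(0) = 0, and let σ₀ > 0. Then there exists a constant γ ≤ −1 such that for every x ∈ ℝ with x² + f(x)² ≤ σ₀² one has x² + f(x)² ≤ 2γ·x·f(x). -/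
theorem stmt_6 (f : ℝ → ℝ) (hf : ContDiff ℝ 1 f)
    (hd : ∀ x : ℝ, deriv f x < 0) (h0 : f 0 = 0)
    (σ₀ : ℝ) (hσ₀ : 0 < σ₀) :
    ∃ γ : ℝ, γ ≤ -1 ∧
      ∀ x : ℝ, x ^ 2 + f x ^ 2 ≤ σ₀ ^ 2 →
        x ^ 2 + f x ^ 2 ≤ 2 * γ * x * f x := by
  have hdiff : Differentiable ℝ f := hf.differentiable one_ne_zero
  have hfc : Continuous f := hf.continuous
  have hanti : StrictAnti f := strictAnti_of_deriv_neg hd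
  set q : ℝ → ℝ := fun x => if x = 0 then deriv f 0 else f x / x with hqdef
  have hqneg : ∀ x, q x < 0 := by
    intro x
    rcases lt_trichotomy x 0 with h | h | h
    · have hfx : 0 < f x := by
        have := hanti h; rwa [h0] at this
      simp only [hqdef, if_neg (ne_of_lt h)]
      exact div_neg_of_pos_of_neg hfx h
    · simp [hqdef, h, hd 0]
    · have hfx : f x < 0 := by
        have := hanti h; rwa [h0] at this
      simp only [hqdef, if_neg (ne_of_gt h)]
      exact div_neg_of_neg_of_pos hfx h
  have hqcont : Continuous q := by
    rw [continuous_iff_continuousAt]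
    intro x
    rcases eq_or_ne x 0 with rfl | hx
    · rw [← continuousWithinAt_compl_self]
      have hder : HasDerivAt f (deriv f 0) 0 := (hdiff 0).hasDerivAt
      have h1 : Filter.Tendsto (slope f 0) (nhdsWithin 0 {(0:ℝ)}ᶜ) (nhds (deriv f 0)) :=
        hasDerivAt_iff_tendsto_slope.mp hder
      have h2 : Filter.Tendsto q (nhdsWithin 0 {(0:ℝ)}ᶜ) (nhds (q 0)) := by
        have hq0 : q 0 = deriv f 0 := by simp [hqdef]
        rw [hq0]
        refine h1.congr' ?_
        filter_upwards [self_mem_nhdsWithin] with y hy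
        simp only [Set.mem_compl_iff, Set.mem_singleton_iff] at hy
        simp [slope_def_field, hqdef, hy, h0]
      exact h2
    · have hc : ContinuousAt (fun y => f y / y) x :=
        (hfc.continuousAt).div continuousAt_id hx
      refine hc.congr ?_
      filter_upwards [eventually_ne_nhds hx] with y hy
      simp [hqdef, hy]
  have hq2 : ∀ x, 2 * q x < 0 := fun x => by linarith [hqneg x]
  set r : ℝ → ℝ := fun x => (1 + q x ^ 2) / (2 * q x) with hrdef
  have hrcont : Continuous r :=
    ((continuous_const.add (hqcont.pow 2)).div (continuous_const.mul hqcont)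
      (fun x => ne_of_lt (hq2 x)))
  obtain ⟨x₀, _, hmin⟩ := isCompact_Icc.exists_isMinOn
    (Set.nonempty_Icc.mpr (by linarith : -σ₀ ≤ σ₀)) hrcont.continuousOn
  refine ⟨r x₀, ?_, ?_⟩
  · rw [hrdef]
    rw [div_le_iff_of_neg (hq2 x₀)]
    nlinarith [sq_nonneg (1 + q x₀)]
  · intro x hx
    have hxIcc : x ∈ Set.Icc (-σ₀) σ₀ := by
      constructor <;> nlinarith [sq_nonneg (f x)]
    have hγ : r x₀ ≤ r x := hmin hxIcc
    have key : 1 + q x ^ 2 ≤ 2 * (r x₀) * q x := by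
      have := (le_div_iff_of_neg (hq2 x)).mp hγ
      nlinarith
    rcases eq_or_ne x 0 with rfl | hx0
    · simp [h0]
    · have hfx : f x = x * q x := by
        simp only [hqdef, if_neg hx0]
        field_simp
      rw [hfx]
      nlinarith [mul_le_mul_of_nonneg_left key (sq_nonneg x), sq_nonneg x]
end

section
/- Let a < 0 and define F_b(t) := t/(1 − b·t) wherever 1 − b·t ≠ 0. Let s₀ be a real number with 1/a < s₀ < 0, and let φ : [0,∞) → ℝ be strictly decreasing with φ(0) = 0 and s₀ ≤ φ(x) ≤ 0 for all x ≥ 0, and assume φ has a (right) derivative φ'(0) at 0. Define ψ on [0, −1/a) by ψ(x) := F_a(φ(F_{−a}(x))). Then ψ is well defined (that is, 1 + a·x > 0 and 1 − a·φ(F_{−a}(x)) > 0 for all x ∈ [0,−1/a)), ψ(0) = 0, ψ is strictly decreasing on [0, −1/a), and ψ has right derivative φ'(0) at 0. -/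
theorem stmt_18 (a : ℝ) (ha : a < 0)
    (s₀ : ℝ) (hs₀ : 1 / a < s₀) (hs₀' : s₀ < 0)
    (φ : ℝ → ℝ) (hφanti : StrictAntiOn φ (Set.Ici 0)) (hφ0 : φ 0 = 0)
    (hφbd : ∀ x : ℝ, 0 ≤ x → s₀ ≤ φ x ∧ φ x ≤ 0)
    (d : ℝ) (hd : HasDerivWithinAt φ d (Set.Ici 0) 0)
    (ψ : ℝ → ℝ)
    (hψ : ∀ x : ℝ, ψ x = (φ (x / (1 + a * x))) / (1 - a * φ (x / (1 + a * x)))) :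
    (∀ x : ℝ, 0 ≤ x → x < -1 / a →
        0 < 1 + a * x ∧ 0 < 1 - a * φ (x / (1 + a * x))) ∧
      ψ 0 = 0 ∧
      StrictAntiOn ψ (Set.Ico 0 (-1 / a)) ∧
      HasDerivWithinAt ψ d (Set.Ici 0) 0 := by
  have ha' : a ≠ 0 := ne_of_lt ha
  have hia : (0:ℝ) < -1 / a := by
    have h : 1 / a < 0 := div_neg_of_pos_of_neg one_pos ha
    rw [neg_div]; linarith
  -- denominator positivity
  have hden : ∀ x : ℝ, 0 ≤ x → x < -1 / a → 0 < 1 + a * x := by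
    intro x hx hx'
    have h1 : a * (-1 / a) < a * x := mul_lt_mul_of_neg_left hx' ha
    have h2 : a * (-1 / a) = -1 := by field_simp
    linarith
  have hden2 : ∀ t : ℝ, s₀ ≤ t → t ≤ 0 → 0 < 1 - a * t := by
    intro t h1 h2
    have h3 : a * t ≤ a * s₀ := mul_le_mul_of_nonpos_left h1 (le_of_lt ha)
    have h4 : a * s₀ < a * (1 / a) := mul_lt_mul_of_neg_left hs₀ ha
    have h5 : a * (1 / a) = 1 := by field_simp
    linarith
  have hg : ∀ x : ℝ, 0 ≤ x → x < -1 / a → 0 ≤ x / (1 + a * x) := by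
    intro x hx hx'
    exact div_nonneg hx (le_of_lt (hden x hx hx'))
  have hmain : ∀ x : ℝ, 0 ≤ x → x < -1 / a →
      0 < 1 + a * x ∧ 0 < 1 - a * φ (x / (1 + a * x)) := by
    intro x hx hx'
    refine ⟨hden x hx hx', ?_⟩
    obtain ⟨h1, h2⟩ := hφbd _ (hg x hx hx')
    exact hden2 _ h1 h2
  have hψ0 : ψ 0 = 0 := by
    rw [hψ]; simp [hφ0]
  -- strict antitonicity
  have hanti : StrictAntiOn ψ (Set.Ico 0 (-1 / a)) := by
    intro x hx y hy hxy
    obtain ⟨hx0, hx1⟩ := hx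
    obtain ⟨hy0, hy1⟩ := hy
    have hdx := hden x hx0 hx1
    have hdy := hden y hy0 hy1
    have hgx := hg x hx0 hx1
    have hgy := hg y hy0 hy1
    have hglt : x / (1 + a * x) < y / (1 + a * y) := by
      rw [div_lt_div_iff₀ hdx hdy]; nlinarith
    have hφlt : φ (y / (1 + a * y)) < φ (x / (1 + a * x)) :=
      hφanti hgx hgy hglt
    have hdx2 := (hmain x hx0 hx1).2
    have hdy2 := (hmain y hy0 hy1).2
    rw [hψ x, hψ y, div_lt_div_iff₀ hdy2 hdx2]
    nlinarith
  refine ⟨hmain, hψ0, hanti, ?_⟩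
  -- derivative
  have hψeq : ψ = fun x => (φ (x / (1 + a * x))) / (1 - a * φ (x / (1 + a * x))) := by
    funext x; exact hψ x
  set g : ℝ → ℝ := fun x => x / (1 + a * x) with hgdef
  have hgderiv : HasDerivAt g 1 0 := by
    have h1 : HasDerivAt (fun x : ℝ => x) 1 0 := hasDerivAt_id 0
    have h2 : HasDerivAt (fun x : ℝ => 1 + a * x) a 0 := by
      simpa using ((hasDerivAt_id 0).const_mul a).const_add 1
    have h3 : (1 : ℝ) + a * 0 ≠ 0 := by simp
    have := h1.div h2 h3
    exact this.congr_deriv (by simp)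
  have hgmaps : Set.MapsTo g (Set.Ico 0 (-1 / a)) (Set.Ici 0) := by
    intro x hx
    exact hg x hx.1 hx.2
  have hg0 : g 0 = 0 := by simp [hgdef]
  have hφg : HasDerivWithinAt (fun x => φ (g x)) (d * 1) (Set.Ico 0 (-1 / a)) 0 := by
    refine HasDerivWithinAt.comp 0 ?_ (hgderiv.hasDerivWithinAt) hgmaps
    rw [hg0]; exact hd
  set F : ℝ → ℝ := fun t => t / (1 - a * t) with hFdef
  have hFderiv : HasDerivAt F 1 0 := by
    have h1 : HasDerivAt (fun t : ℝ => t) 1 0 := hasDerivAt_id 0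
    have h2 : HasDerivAt (fun t : ℝ => 1 - a * t) (-a) 0 := by
      simpa using (((hasDerivAt_id 0).const_mul a).const_sub 1)
    have h3 : (1 : ℝ) - a * 0 ≠ 0 := by simp
    have := h1.div h2 h3
    exact this.congr_deriv (by simp)
  have hcomp : HasDerivWithinAt (fun x => F (φ (g x))) (1 * (d * 1))
      (Set.Ico 0 (-1 / a)) 0 := by
    have hF' : HasDerivAt F 1 ((fun x => φ (g x)) 0) := by
      simp only [hg0, hφ0]; exact hFderiv
    have := HasDerivAt.comp_hasDerivWithinAt 0 hF' hφg
    exact this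
  have hψcomp : HasDerivWithinAt ψ d (Set.Ico 0 (-1 / a)) 0 := by
    simpa [hψeq, hFdef, hgdef] using hcomp
  have hmem : Set.Ico 0 (-1 / a) ∈ nhdsWithin (0:ℝ) (Set.Ici 0) := by
    have : Set.Ico 0 (-1 / a) = Set.Ici 0 ∩ Set.Iio (-1 / a) := by
      ext t; simp [Set.mem_Ico, Set.mem_Ici, Set.mem_Iio, and_comm]
    rw [this]
    exact inter_mem_nhdsWithin _ (Iio_mem_nhds hia)
  exact hψcomp.mono_of_mem_nhdsWithin hmem
end
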